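/- Define A_m(u, θ) := Σ_{k=0}^{⌊m/2⌋} D_m^k (1-θ)^k u^{m-2k}, where D_m^k = m!/((m-2k)!·2^k·k!). Then for every natural number n, every real u and every real θ > 0, the combined shift-and-scale identity holds: H_n((x - u)/√θ) = θ^{-n/2} · Σ_{k=0}^{n} (-1)^{n-k} C(n,k) · H_k(x) · A_{n-k}(u, θ). -/
import Mathlib


open Nat Polynomial

/-- `D m k = m!/((m-2k)! 2^k k!)`. -/
def D (m k : ℕ) : ℕ := m ! / ((m - 2 * k)! * 2 ^ k * k !)

/-- `A m u θ = ∑_{k ≤ ⌊m/2⌋} D_m^k (1-θ)^k u^{m-2k}`. -/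
noncomputable def A (m : ℕ) (u θ : ℝ) : ℝ :=
  ∑ k ∈ Finset.range (m / 2 + 1), (D m k : ℝ) * (1 - θ) ^ k * u ^ (m - 2 * k)

lemma deriv_hermite : ∀ n : ℕ, derivative (hermite n) = (n : ℤ[X]) * hermite (n-1)
  | 0 => by simp [hermite_zero]
  | (n+1) => by
    rw [hermite_succ, derivative_sub, derivative_mul, derivative_X, one_mul,
      deriv_hermite n, derivative_mul, derivative_natCast, zero_mul, zero_add,
      mul_comm (X) ((n:ℤ[X]) * hermite (n-1)), mul_assoc, mul_comm (hermite (n-1)) X,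
      add_sub_assoc, ← mul_sub, ← hermite_succ]
    cases n with
    | zero => simp [hermite_zero]
    | succ m =>
      simp only [Nat.succ_sub_one]
      push_cast
      ring

lemma hermite_rec (n : ℕ) : hermite (n+2) = X * hermite (n+1) - ((n:ℤ[X])+1) * hermite n := by
  rw [hermite_succ, deriv_hermite]
  push_cast
  simp

noncomputable def Hh (n : ℕ) (x : ℝ) : ℝ := ((hermite n).map (Int.castRingHom ℝ)).eval x

lemma Hh_zero (x : ℝ) : Hh 0 x = 1 := by simp [Hh, hermite_zero]
lemma Hh_one (x : ℝ) : Hh 1 x = x := by simp [Hh, hermite_one]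
lemma Hh_rec (n : ℕ) (x : ℝ) : Hh (n+2) x = x * Hh (n+1) x - (n+1) * Hh n x := by
  simp only [Hh, hermite_rec, Polynomial.map_sub, Polynomial.map_mul, Polynomial.map_add,
    Polynomial.map_X, Polynomial.map_natCast, Polynomial.map_one, eval_sub, eval_mul, eval_X,
    eval_add, eval_natCast, eval_one]
lemma two_pow_fact_dvd (k : ℕ) : 2 ^ k * k ! ∣ (2 * k)! := by
  induction k with
  | zero => simp
  | succ k ih =>
    have h : (2 * (k+1))! = ((2*k+2) * (2*k+1)) * (2*k)! := by
      have : 2 * (k+1) = (2*k+1) + 1 := by ring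
      rw [this, factorial_succ, factorial_succ]; ring
    have h2 : 2 ^ (k+1) * (k+1)! = (2*(k+1)) * (2 ^ k * k !) := by
      rw [pow_succ, factorial_succ]; ring
    rw [h, h2]
    exact mul_dvd_mul ⟨2*k+1, by ring⟩ ih

lemma denom_dvd (m k : ℕ) (h : 2 * k ≤ m) : (m - 2 * k)! * 2 ^ k * k ! ∣ m ! := by
  have h1 : (2*k)! * (m - 2*k)! ∣ m ! := Nat.factorial_mul_factorial_dvd_factorial h
  calc (m - 2 * k)! * 2 ^ k * k ! = (m - 2*k)! * (2 ^ k * k !) := by ring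
    _ ∣ (m - 2*k)! * (2*k)! := mul_dvd_mul_left _ (two_pow_fact_dvd k)
    _ = (2*k)! * (m - 2*k)! := mul_comm _ _
    _ ∣ m ! := h1

noncomputable def B (m k : ℕ) : ℝ :=
  if 2 * k ≤ m then (m ! : ℝ) / (((m - 2 * k)! : ℝ) * 2 ^ k * k !) else 0

lemma castD (m k : ℕ) (h : 2 * k ≤ m) : (D m k : ℝ) = B m k := by
  rw [B, if_pos h, D, Nat.cast_div (denom_dvd m k h)]
  · push_cast; ring_nf
  · positivity

lemma A_eq (m : ℕ) (u θ : ℝ) :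
    A m u θ = ∑ k ∈ Finset.range (m + 1), B m k * (1 - θ) ^ k * u ^ (m - 2 * k) := by
  rw [A]
  apply Finset.sum_subset_zero_on_sdiff
  · exact Finset.range_subset_range.mpr (by omega)
  · intro k hk
    simp only [Finset.mem_sdiff, Finset.mem_range] at hk
    have : ¬ (2 * k ≤ m) := by omega
    rw [B, if_neg this]; ring
  · intro k hk
    simp only [Finset.mem_range] at hk
    rw [castD m k (by omega)]

lemma B_rec (m k : ℕ) :
    B (m + 2) k = B (m + 1) k + (m + 1) * (if k = 0 then 0 else B m (k - 1)) := by
  match k with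
  | 0 =>
    have h1 : (((m+2)!:ℝ)) ≠ 0 := by positivity
    have h2 : (((m+1)!:ℝ)) ≠ 0 := by positivity
    simp [B, div_self h1, div_self h2]
  | (j+1) =>
    simp only [Nat.add_sub_cancel, if_neg (Nat.succ_ne_zero j)]
    rcases le_or_gt (2*j+1) m with h1 | h1
    · -- general case : 2(j+1) ≤ m+1
      obtain ⟨r, rfl⟩ : ∃ r, m = 2*j+1+r := ⟨m - (2*j+1), by omega⟩
      rw [B, if_pos (by omega), B, if_pos (by omega), B, if_pos (by omega)]
      have e1 : 2*j+1+r+2 - 2*(j+1) = r + 1 := by omega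
      have e2 : 2*j+1+r+1 - 2*(j+1) = r := by omega
      have e3 : 2*j+1+r - 2*j = r + 1 := by omega
      rw [e1, e2, e3]
      have f1 : ((2*j+1+r+2)! : ℝ) = (2*j+1+r+2) * (2*j+1+r+1) * (2*j+1+r)! := by
        rw [show 2*j+1+r+2 = (2*j+1+r+1)+1 by ring, factorial_succ, factorial_succ]; push_cast; ring
      have f2 : ((2*j+1+r+1)! : ℝ) = (2*j+1+r+1) * (2*j+1+r)! := by
        rw [factorial_succ]; push_cast; ring
      have f3 : ((r+1)! : ℝ) = (r+1) * r ! := by rw [factorial_succ]; push_cast; ring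
      have f4 : ((j+1)! : ℝ) = (j+1) * j ! := by rw [factorial_succ]; push_cast; ring
      rw [f1, f2, f3, f4, pow_succ]
      have hr : (r ! : ℝ) ≠ 0 := by positivity
      have hj : (j ! : ℝ) ≠ 0 := by positivity
      have hm : (((2*j+1+r)!) : ℝ) ≠ 0 := by positivity
      have h2 : (2:ℝ)^j ≠ 0 := by positivity
      field_simp
      push_cast
      ring
    · rcases le_or_gt (2*j) m with h2 | h2
      · -- m = 2j
        have hm : m = 2*j := by omega
        subst hm
        rw [B, if_pos (by omega), B, if_neg (by omega), B, if_pos (by omega)]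
        have e1 : 2*j+2 - 2*(j+1) = 0 := by omega
        have e2 : 2*j - 2*j = 0 := by omega
        rw [e1, e2]
        have f1 : ((2*j+2)! : ℝ) = (2*j+2) * (2*j+1) * (2*j)! := by
          rw [show 2*j+2 = (2*j+1)+1 by ring, factorial_succ, factorial_succ]; push_cast; ring
        have f4 : ((j+1)! : ℝ) = (j+1) * j ! := by rw [factorial_succ]; push_cast; ring
        rw [f1, f4, pow_succ]
        have hj : (j ! : ℝ) ≠ 0 := by positivity
        have h2 : (2:ℝ)^j ≠ 0 := by positivity
        field_simp
        push_cast
        ring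
      · -- all zero
        rw [B, if_neg (by omega), B, if_neg (by omega), B, if_neg (by omega)]
        ring

lemma A_zero (u θ : ℝ) : A 0 u θ = 1 := by simp [A, D]
lemma A_one (u θ : ℝ) : A 1 u θ = u := by simp [A, D]

lemma A_rec (m : ℕ) (u θ : ℝ) :
    A (m + 2) u θ = u * A (m + 1) u θ + (m + 1) * (1 - θ) * A m u θ := by
  rw [A_eq, A_eq, A_eq, Finset.mul_sum, Finset.mul_sum]
  have step1 : ∀ k ∈ Finset.range (m + 3),
      B (m+2) k * (1-θ)^k * u^(m+2-2*k)
      = B (m+1) k * (1-θ)^k * u^(m+2-2*k)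
        + (m+1) * (if k = 0 then 0 else B m (k-1)) * (1-θ)^k * u^(m+2-2*k) := by
    intro k _
    rw [B_rec]; ring
  rw [show m + 2 + 1 = m + 3 by ring, Finset.sum_congr rfl step1, Finset.sum_add_distrib]
  congr 1
  · -- first sum = u * A (m+1) part
    rw [Finset.sum_range_succ]
    have hz : B (m+1) (m+2) = 0 := by rw [B, if_neg (by omega)]
    rw [hz]
    simp only [zero_mul, add_zero]
    apply Finset.sum_congr rfl
    intro k hk
    simp only [Finset.mem_range] at hk
    rcases le_or_gt (2*k) (m+1) with h | h
    · have : m + 2 - 2*k = (m+1-2*k) + 1 := by omega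
      rw [this, pow_succ]; ring
    · rw [B, if_neg (by omega)]; ring
  · -- second sum = (m+1)(1-θ) A m part
    rw [Finset.sum_range_succ']
    simp only [if_true, eq_self_iff_true, if_pos, mul_zero, zero_mul, add_zero,
      if_neg (Nat.succ_ne_zero _), Nat.add_sub_cancel, pow_zero, mul_one]
    rw [Finset.sum_range_succ]
    have hz : B m (m+1) = 0 := by rw [B, if_neg (by omega)]
    rw [hz]
    simp only [mul_zero, zero_mul, add_zero]
    apply Finset.sum_congr rfl
    intro k hk
    have e : m + 2 - 2*(k+1) = m - 2*k := by omega
    rw [e, pow_succ]; ring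

lemma Hh_rec' (s : ℕ) (x : ℝ) : Hh (s + 1) x = x * Hh s x - s * Hh (s - 1) x := by
  match s with
  | 0 => simp [Hh_zero, Hh_one]
  | (t+1) => rw [Hh_rec]; push_cast; simp

lemma A_rec' (k : ℕ) (u θ : ℝ) :
    A (k + 1) u θ = u * A k u θ + k * (1 - θ) * A (k - 1) u θ := by
  match k with
  | 0 => simp [A_zero, A_one]
  | (t+1) => rw [A_rec]; push_cast; simp

noncomputable def Tr (n : ℕ) (u θ x : ℝ) : ℝ :=
  ∑ k ∈ Finset.range (n + 1), (-1 : ℝ) ^ k * (n.choose k : ℝ) * A k u θ * Hh (n - k) x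

lemma Tr_zero (u θ x : ℝ) : Tr 0 u θ x = 1 := by
  simp [Tr, A_zero, Hh_zero]

lemma Tr_one (u θ x : ℝ) : Tr 1 u θ x = x - u := by
  rw [Tr, Finset.sum_range_succ, Finset.sum_range_one]
  simp [A_zero, A_one, Hh_zero, Hh_one]
  ring

lemma Tr_rec (n : ℕ) (u θ x : ℝ) :
    Tr (n + 2) u θ x = (x - u) * Tr (n + 1) u θ x - (n + 1) * θ * Tr n u θ x := by
  have hS1 : ∑ k ∈ Finset.range (n + 3),
      (-1 : ℝ) ^ k * ((n+1).choose k : ℝ) * A k u θ * Hh (n + 2 - k) x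
      = x * Tr (n+1) u θ x - (n + 1) * Tr n u θ x := by
    rw [Finset.sum_range_succ]
    have hz : ((n+1).choose (n+3-1) : ℝ) = 0 := by
      rw [Nat.choose_eq_zero_of_lt (by omega)]; norm_num
    rw [show n+3-1 = n+2 from rfl] at hz
    rw [hz]
    simp only [mul_zero, zero_mul, add_zero]
    have e1 : ∀ k ∈ Finset.range (n + 2),
        (-1 : ℝ) ^ k * ((n+1).choose k : ℝ) * A k u θ * Hh (n + 2 - k) x
        = x * ((-1 : ℝ) ^ k * ((n+1).choose k : ℝ) * A k u θ * Hh (n + 1 - k) x)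
          - (n+1) * ((-1 : ℝ) ^ k * (n.choose k : ℝ) * A k u θ * Hh (n - k) x) := by
      intro k hk
      simp only [Finset.mem_range] at hk
      have h2 : n + 2 - k = (n + 1 - k) + 1 := by omega
      rw [h2, Hh_rec']
      have h3 : n + 1 - k - 1 = n - k := by omega
      rw [h3]
      have h4 : ((n + 1 - k : ℕ) : ℝ) * ((n+1).choose k : ℝ) = (n+1) * (n.choose k : ℝ) := by
        have hn : (n + 1 - k) * (n+1).choose k = (n+1) * n.choose k := by
          rw [mul_comm ((n:ℕ)+1) _, Nat.choose_mul_succ_eq n k, mul_comm]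
        exact_mod_cast congrArg (Nat.cast : ℕ → ℝ) hn
      push_cast at h4 ⊢
      linear_combination (-((-1:ℝ)^k * A k u θ * Hh (n-k) x)) * h4
    rw [Finset.sum_congr rfl e1, Finset.sum_sub_distrib, ← Finset.mul_sum, ← Finset.mul_sum]
    have e2 : ∑ k ∈ Finset.range (n + 2),
        (-1 : ℝ) ^ k * (n.choose k : ℝ) * A k u θ * Hh (n - k) x = Tr n u θ x := by
      rw [Finset.sum_range_succ]
      have hz2 : ((n).choose (n+1) : ℝ) = 0 := by
        rw [Nat.choose_eq_zero_of_lt (by omega)]; norm_num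
      rw [hz2, Tr]
      simp
    rw [e2]
    simp only [Tr, show n+1+1 = n+2 from rfl]
  have hSa : ∑ k ∈ Finset.range (n + 2),
      (-1 : ℝ) ^ (k+1) * ((n+1).choose k : ℝ) * A (k+1) u θ * Hh (n + 1 - k) x
      = -u * Tr (n+1) u θ x + (1 - θ) * ((n+1) * Tr n u θ x) := by
    have e1 : ∀ k ∈ Finset.range (n + 2),
        (-1 : ℝ) ^ (k+1) * ((n+1).choose k : ℝ) * A (k+1) u θ * Hh (n + 1 - k) x
        = -u * ((-1 : ℝ) ^ k * ((n+1).choose k : ℝ) * A k u θ * Hh (n + 1 - k) x)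
          + (1 - θ) * ((-1 : ℝ) ^ (k+1) * ((k * (n+1).choose k : ℕ) : ℝ) * A (k-1) u θ
              * Hh (n + 1 - k) x) := by
      intro k hk
      rw [A_rec']
      push_cast
      ring
    rw [Finset.sum_congr rfl e1, Finset.sum_add_distrib, ← Finset.mul_sum, ← Finset.mul_sum]
    have e2 : ∑ k ∈ Finset.range (n + 2),
        (-1 : ℝ) ^ (k+1) * ((k * (n+1).choose k : ℕ) : ℝ) * A (k-1) u θ * Hh (n + 1 - k) x
        = (n+1) * Tr n u θ x := by
      rw [Finset.sum_range_succ']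
      simp only [Nat.zero_mul, Nat.cast_zero, mul_zero, zero_mul, add_zero]
      have e3 : ∀ k ∈ Finset.range (n + 1),
          (-1 : ℝ) ^ (k+1+1) * (((k+1) * (n+1).choose (k+1) : ℕ) : ℝ) * A (k+1-1) u θ
            * Hh (n + 1 - (k+1)) x
          = (n+1) * ((-1 : ℝ) ^ k * (n.choose k : ℝ) * A k u θ * Hh (n - k) x) := by
        intro k hk
        have hc : (k+1) * (n+1).choose (k+1) = (n+1) * n.choose k := by
          rw [mul_comm, ← Nat.add_one_mul_choose_eq]
        rw [hc, Nat.succ_sub_succ, Nat.sub_zero, Nat.succ_sub_succ]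
        push_cast
        ring
      rw [Finset.sum_congr rfl e3, ← Finset.mul_sum, Tr]
    rw [e2]
    simp only [Tr, show n+1+1 = n+2 from rfl]
  have hsplit : Tr (n+2) u θ x
      = (∑ k ∈ Finset.range (n + 3),
          (-1 : ℝ) ^ k * ((n+1).choose k : ℝ) * A k u θ * Hh (n + 2 - k) x)
        + ∑ k ∈ Finset.range (n + 2),
          (-1 : ℝ) ^ (k+1) * ((n+1).choose k : ℝ) * A (k+1) u θ * Hh (n + 1 - k) x := by
    rw [Tr, show n+2+1 = n+3 from rfl, Finset.sum_range_succ' _ (n+2),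
      Finset.sum_range_succ' (fun k => (-1 : ℝ) ^ k * ((n+1).choose k : ℝ) * A k u θ
        * Hh (n + 2 - k) x) (n+2)]
    have e4 : ∀ k ∈ Finset.range (n + 2),
        (-1 : ℝ) ^ (k+1) * ((n+2).choose (k+1) : ℝ) * A (k+1) u θ * Hh (n + 2 - (k+1)) x
        = (-1 : ℝ) ^ (k+1) * ((n+1).choose (k+1) : ℝ) * A (k+1) u θ * Hh (n + 2 - (k+1)) x
          + (-1 : ℝ) ^ (k+1) * ((n+1).choose k : ℝ) * A (k+1) u θ * Hh (n + 1 - k) x := by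
      intro k hk
      rw [Nat.choose_succ_succ (n+1) k, Nat.succ_sub_succ]
      push_cast
      ring
    rw [Finset.sum_congr rfl e4, Finset.sum_add_distrib]
    simp only [Nat.choose_zero_right, Nat.cast_one]
    ring
  rw [hsplit, hS1, hSa]
  ring

theorem hermite_shift_scale (n : ℕ) (u θ : ℝ) (hθ : 0 < θ) (x : ℝ) :
    ((hermite n).map (Int.castRingHom ℝ)).eval ((x - u) / Real.sqrt θ) =
      θ ^ (-(n : ℝ) / 2) *
        ∑ k ∈ Finset.range (n + 1),
          (-1 : ℝ) ^ (n - k) * (n.choose k : ℝ) *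
            ((hermite k).map (Int.castRingHom ℝ)).eval x * A (n - k) u θ := by
  have hs : Real.sqrt θ ≠ 0 := ne_of_gt (Real.sqrt_pos.mpr hθ)
  have hsq : Real.sqrt θ * Real.sqrt θ = θ := Real.mul_self_sqrt hθ.le
  set y : ℝ := (x - u) / Real.sqrt θ with hy
  have key : ∀ m : ℕ, (Real.sqrt θ) ^ m * Hh m y = Tr m u θ x := by
    intro m
    induction m using Nat.twoStepInduction with
    | zero => simp [Hh_zero, Tr_zero]
    | one =>
      rw [Tr_one, Hh_one, pow_one, hy]
      field_simp
    | more m ih0 ih1 =>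
      rw [Hh_rec, Tr_rec, ← ih0, ← ih1, hy]
      have h2 : (Real.sqrt θ) ^ (m+2) = θ * (Real.sqrt θ) ^ m := by
        rw [pow_succ, pow_succ, mul_assoc, hsq]; ring
      rw [h2]
      field_simp
      rw [pow_succ]
      linear_combination (-(x - u) * Real.sqrt θ ^ m * Hh (m+1) ((x-u)/Real.sqrt θ)) * hsq
  -- convert the sum to Tr
  have hT : (∑ k ∈ Finset.range (n + 1),
      (-1 : ℝ) ^ (n - k) * (n.choose k : ℝ) *
        ((hermite k).map (Int.castRingHom ℝ)).eval x * A (n - k) u θ) = Tr n u θ x := by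
    rw [Tr, ← Finset.sum_range_reflect]
    apply Finset.sum_congr rfl
    intro j hj
    simp only [Finset.mem_range] at hj
    have hj' : j ≤ n := by omega
    rw [show n + 1 - 1 - j = n - j from rfl, Nat.choose_symm hj', show n - (n - j) = j by omega]
    simp only [Hh]
    ring
  rw [hT]
  -- power identity
  have hpow : θ ^ (-(n : ℝ) / 2) = ((Real.sqrt θ) ^ n)⁻¹ := by
    rw [show (-(n : ℝ) / 2) = -((1/2 : ℝ) * (n : ℝ)) by ring, Real.rpow_neg hθ.le,
      Real.rpow_mul hθ.le, Real.rpow_natCast, ← Real.sqrt_eq_rpow]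
  rw [hpow, ← key n]
  have hsn : (Real.sqrt θ) ^ n ≠ 0 := pow_ne_zero _ hs
  show Hh n y = _
  field_simp
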